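/- If a path P = (p_0,...,p_k) is realized by a prefix of T_{ijk}(n) of length l, and the l-th element of T_{ijk}(n) is (i, j, k') with j < k', then any newly realized path using that element as its top-level split must be exactly the path (i, k', j) of two edges. -/

import Mathlib

/-- The sequence `T_ijk(n)`: element at position `a·n² + b·n + c` is `(a+1, b+1, c+1)`. -/
def Tijk (n : ℕ) : List (ℕ × ℕ × ℕ) :=
  (List.range n).flatMap fun a => (List.range n).flatMap fun b =>
    (List.range n).map fun c => (a + 1, b + 1, c + 1)

/-- The sequence `T_kij(n)`: element at position `a·n² + b·n + c` is `(b+1, c+1, a+1)`. -/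
def Tkij (n : ℕ) : List (ℕ × ℕ × ℕ) :=
  (List.range n).flatMap fun a => (List.range n).flatMap fun b =>
    (List.range n).map fun c => (b + 1, c + 1, a + 1)

/-- `T_ijk(n, i, j)`: the prefix of `T_ijk(n)` up to and including the tuple `(i, j, n)`. -/
def TijkPrefix (n i j : ℕ) : List (ℕ × ℕ × ℕ) :=
  (Tijk n).take ((i - 1) * n ^ 2 + (j - 1) * n + n)

/-- A path `P` (a list of vertices) is realized by a sequence `T` of 3-tuples:
either it has at most one edge, or some position `d` of `T` holds the tuple
`(first, last, split vertex p_x)` with both halves realized by the length-`d` prefix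
(`d` here is 0-indexed, so `T.take d` is the prefix strictly before position `d`). -/
inductive Realized : List (ℕ × ℕ × ℕ) → List ℕ → Prop
  | base (T : List (ℕ × ℕ × ℕ)) (P : List ℕ) (h : P.length ≤ 2) : Realized T P
  | step (T : List (ℕ × ℕ × ℕ)) (P : List ℕ) (d x : ℕ)
      (hd : d < T.length) (hx1 : 1 ≤ x) (hx2 : x ≤ P.length - 2)
      (ht : T.getD d default = (P.getD 0 0, P.getD (P.length - 1) 0, P.getD x 0))
      (h1 : Realized (T.take d) (P.take (x + 1)))
      (h2 : Realized (T.take d) (P.drop x)) : Realized T P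

/-- A path with at least one edge, all of whose vertices lie in `[1, n]`. -/
def ValidPath (n : ℕ) (P : List ℕ) : Prop :=
  2 ≤ P.length ∧ ∀ v ∈ P, 1 ≤ v ∧ v ≤ n

/-- Increasing path. -/
def Increasing (P : List ℕ) : Prop := P.Chain' (· < ·)

/-- Decreasing path. -/
def Decreasing (P : List ℕ) : Prop := P.Chain' (· > ·)

/-- Valley path: every interior vertex is at most the min of the endpoints. -/
def Valley (P : List ℕ) : Prop :=
  ∀ t, 1 ≤ t → t ≤ P.length - 2 →
    P.getD t 0 ≤ min (P.getD 0 0) (P.getD (P.length - 1) 0)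

/-- Proper path: no two consecutive vertices `p_t, p_{t+1}` with `1 ≤ t ≤ k-2`
both exceed the min of the endpoints. -/
def Proper (P : List ℕ) : Prop :=
  ¬ ∃ t, 1 ≤ t ∧ t ≤ P.length - 3 ∧
    min (P.getD 0 0) (P.getD (P.length - 1) 0) < P.getD t 0 ∧
    min (P.getD 0 0) (P.getD (P.length - 1) 0) < P.getD (t + 1) 0

/-- Total weight of a path: the sum of the weights of its consecutive edges. -/
def pathWeight (W : ℕ → ℕ → WithTop ℤ) (P : List ℕ) : WithTop ℤ :=
  ((P.zip P.tail).map fun q => W q.1 q.2).sum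

/-- One relaxation step `A[i,j] ← min(A[i,j], A[i,k] + A[k,j])` for the tuple `(i,j,k)`. -/
def relaxStep (A : ℕ → ℕ → WithTop ℤ) (t : ℕ × ℕ × ℕ) : ℕ → ℕ → WithTop ℤ :=
  fun i j => if i = t.1 ∧ j = t.2.1 then min (A i j) (A i t.2.2 + A t.2.2 j) else A i j

/-- Apply the relaxation steps of the sequence `T` in order, starting from `A`. -/
def relaxAll (A : ℕ → ℕ → WithTop ℤ) (T : List (ℕ × ℕ × ℕ)) : ℕ → ℕ → WithTop ℤ :=
  T.foldl relaxStep A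

/-- No negative cycles on the vertex set `[1, n]`. -/
def NoNegCycle (n : ℕ) (W : ℕ → ℕ → WithTop ℤ) : Prop :=
  ∀ P : List ℕ, 2 ≤ P.length → (∀ v ∈ P, 1 ≤ v ∧ v ≤ n) →
    P.getD 0 0 = P.getD (P.length - 1) 0 → 0 ≤ pathWeight W P

section Aux

lemma flatMap_const_length {α : Type*} (f : ℕ → List α) (m : ℕ) (hf : ∀ a, (f a).length = m) :
    ∀ n : ℕ, ((List.range n).flatMap f).length = n * m := by
  intro n
  induction n with
  | zero => simp
  | succ n ih =>
    rw [List.range_succ, List.flatMap_append, List.length_append, ih]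
    simp [hf, Nat.succ_mul]

lemma flatMap_const_getD {α : Type*} (f : ℕ → List α) (m : ℕ) (hf : ∀ a, (f a).length = m)
    (dflt : α) : ∀ n a j : ℕ, a < n → j < m →
    ((List.range n).flatMap f).getD (a * m + j) dflt = (f a).getD j dflt := by
  intro n
  induction n with
  | zero => omega
  | succ n ih =>
    intro a j ha hj
    rw [List.range_succ, List.flatMap_append]
    rcases Nat.lt_or_ge a n with h | h
    · rw [List.getD_append _ _ _ _ (by rw [flatMap_const_length f m hf]; nlinarith)]
      exact ih a j h hj
    · have haa : a = n := by omega
      subst haa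
      rw [List.getD_append_right _ _ _ _ (by rw [flatMap_const_length f m hf]; omega)]
      rw [flatMap_const_length f m hf]
      simp

lemma Tijk_eq_flatMap (n : ℕ) : Tijk n = (List.range n).flatMap fun a =>
    (List.range n).flatMap fun b => (List.range n).map fun c => (a + 1, b + 1, c + 1) := rfl

lemma Tijk_length (n : ℕ) : (Tijk n).length = n * n * n := by
  have h1 : ∀ a : ℕ, ((List.range n).flatMap fun b =>
      (List.range n).map fun c => (a + 1, b + 1, c + 1)).length = n * n := by
    intro a
    exact flatMap_const_length _ n (fun b => by simp) n
  have := flatMap_const_length (fun a => (List.range n).flatMap fun b =>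
      (List.range n).map fun c => (a + 1, b + 1, c + 1)) (n * n) h1 n
  rw [Tijk_eq_flatMap, this, Nat.mul_assoc]

lemma Tijk_getD_of (n a b c : ℕ) (ha : a < n) (hb : b < n) (hc : c < n) :
    (Tijk n).getD (a * (n * n) + (b * n + c)) default = (a + 1, b + 1, c + 1) := by
  have h1 : ∀ a : ℕ, ((List.range n).flatMap fun b =>
      (List.range n).map fun c => (a + 1, b + 1, c + 1)).length = n * n := by
    intro a
    exact flatMap_const_length _ n (fun b => by simp) n
  rw [Tijk_eq_flatMap,
    flatMap_const_getD _ (n * n) h1 default n a (b * n + c) ha (by nlinarith),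
    flatMap_const_getD _ n (fun b => by simp) default n b c hb hc,
    List.getD_eq_getElem _ _ (by simpa using hc)]
  simp

lemma Tijk_spec (n d : ℕ) (hd : d < (Tijk n).length) :
    ∃ a b c, a < n ∧ b < n ∧ c < n ∧ d = a * (n * n) + b * n + c ∧
      (Tijk n).getD d default = (a + 1, b + 1, c + 1) := by
  rw [Tijk_length] at hd
  have hn : 0 < n := by
    rcases n with _ | n
    · simp at hd
    · omega
  refine ⟨d / (n * n), d % (n * n) / n, d % (n * n) % n, ?_, ?_, ?_, ?_, ?_⟩
  · exact Nat.div_lt_of_lt_mul hd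
  · exact Nat.div_lt_of_lt_mul (Nat.mod_lt _ (by positivity))
  · exact Nat.mod_lt _ hn
  · have e1 := Nat.div_add_mod d (n * n)
    have e2 := Nat.div_add_mod (d % (n * n)) n
    linarith
  · have e1 := Nat.div_add_mod d (n * n)
    have e2 := Nat.div_add_mod (d % (n * n)) n
    have h3 := Tijk_getD_of n (d / (n * n)) (d % (n * n) / n) (d % (n * n) % n)
      (Nat.div_lt_of_lt_mul hd) (Nat.div_lt_of_lt_mul (Nat.mod_lt _ (by positivity)))
      (Nat.mod_lt _ hn)
    have heq : d / (n * n) * (n * n) + (d % (n * n) / n * n + d % (n * n) % n) = d := by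
      linarith
    rwa [heq] at h3

lemma getD_take' {α : Type*} (L : List α) (m t : ℕ) (dflt : α) (h : t < m) (h2 : t < L.length) :
    (L.take m).getD t dflt = L.getD t dflt := by
  rw [List.getD_eq_getElem _ _ (by simp [List.length_take]; omega),
    List.getD_eq_getElem _ _ h2, List.getElem_take]

lemma getD_drop' {α : Type*} (L : List α) (m t : ℕ) (dflt : α) (h : m + t < L.length) :
    (L.drop m).getD t dflt = L.getD (m + t) dflt := by
  rw [List.getD_eq_getElem _ _ (by simp [List.length_drop]; omega),
    List.getD_eq_getElem _ _ h, List.getElem_drop]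

end Aux

/-- If the `l`-th element (1-indexed) of `T_ijk(n)` is `(i, j, k')` with
`i < j < k'` or `j < i < k'`, then any path realized using that element as its
top-level split (with both halves realized by the length-`(l-1)` prefix) must be
exactly the two-edge path `(i, k', j)`. -/
theorem stmt13 (n l i j k' : ℕ) (hl1 : 1 ≤ l) (hl : l ≤ (Tijk n).length)
    (helem : (Tijk n).getD (l - 1) default = (i, j, k'))
    (hord : i < j ∧ j < k' ∨ j < i ∧ i < k')
    (P : List ℕ) (hP : ValidPath n P)
    (hhead : P.getD 0 0 = i) (hlast : P.getD (P.length - 1) 0 = j)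
    (x : ℕ) (hx1 : 1 ≤ x) (hx2 : x ≤ P.length - 2) (hxk : P.getD x 0 = k')
    (h1 : Realized ((Tijk n).take (l - 1)) (P.take (x + 1)))
    (h2 : Realized ((Tijk n).take (l - 1)) (P.drop x)) :
    P = [i, k', j] := by
  have hP2 : 2 ≤ P.length := hP.1
  have hlenT : (Tijk n).length = n * n * n := Tijk_length n
  have hltlen : l - 1 < (Tijk n).length := by omega
  obtain ⟨a, b, c, ha, hb, hc, hdec, hget⟩ := Tijk_spec n (l - 1) hltlen
  rw [helem] at hget
  obtain ⟨hia, hjb, hkc⟩ : i = a + 1 ∧ j = b + 1 ∧ k' = c + 1 := by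
    simpa [Prod.ext_iff] using hget
  have hbc : b < c := by omega
  have hac : a < c := by omega
  have hxP : x + 2 ≤ P.length := by omega
  have hx_eq : x = 1 := by
    rcases h1 with ⟨_, _, hlen⟩ | ⟨_, _, d, y, hd, hy1, hy2, ht, _, _⟩
    · simp only [List.length_take] at hlen; omega
    · exfalso
      have hdl : d < l - 1 := by
        simp only [List.length_take] at hd; omega
      rw [getD_take' (Tijk n) (l - 1) d default hdl (by omega)] at ht
      have hQlen : (P.take (x + 1)).length = x + 1 := by
        simp only [List.length_take]; omega
      rw [hQlen, Nat.add_sub_cancel] at ht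
      rw [getD_take' P (x + 1) 0 0 (by omega) (by omega),
        getD_take' P (x + 1) x 0 (by omega) (by omega), hhead, hxk] at ht
      obtain ⟨a', b', c', ha', hb', hc', hdec', hget'⟩ := Tijk_spec n d (by omega)
      rw [hget'] at ht
      obtain ⟨e1, e2, _⟩ : a' + 1 = i ∧ b' + 1 = k' ∧
          c' + 1 = (P.take (x + 1)).getD y 0 := by simpa [Prod.ext_iff] using ht
      have ea : a' = a := by omega
      have eb : b' = c := by omega
      rw [ea, eb] at hdec'
      have hcn : b * n + n ≤ c * n := by
        have h9 : (b + 1) * n ≤ c * n := mul_le_mul_left (by omega) n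
        linarith only [h9]
      rw [hdec] at hdl
      linarith only [hdl, hdec', hcn, hc]
  have hlen2 : P.length - x ≤ 2 := by
    rcases h2 with ⟨_, _, hlen⟩ | ⟨_, _, d, y, hd, hy1, hy2, ht, _, _⟩
    · simpa [List.length_drop] using hlen
    · exfalso
      have hdl : d < l - 1 := by
        simp only [List.length_take] at hd; omega
      rw [getD_take' (Tijk n) (l - 1) d default hdl (by omega)] at ht
      have hQlen : (P.drop x).length = P.length - x := by
        simp [List.length_drop]
      rw [hQlen] at ht
      have e0 : (P.drop x).getD 0 0 = P.getD x 0 := by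
        have h0 := getD_drop' P x 0 0 (by omega)
        simpa using h0
      have eL : (P.drop x).getD (P.length - x - 1) 0 = P.getD (P.length - 1) 0 := by
        have hL := getD_drop' P x (P.length - x - 1) 0 (by omega)
        rw [hL]
        congr 1
        omega
      rw [e0, eL, hxk, hlast] at ht
      obtain ⟨a', b', c', ha', hb', hc', hdec', hget'⟩ := Tijk_spec n d (by omega)
      rw [hget'] at ht
      obtain ⟨e1, e2, _⟩ : a' + 1 = k' ∧ b' + 1 = j ∧
          c' + 1 = (P.drop x).getD y 0 := by simpa [Prod.ext_iff] using ht
      have ea : a' = c := by omega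
      have eb : b' = b := by omega
      rw [ea, eb] at hdec'
      have h5 : a * (n * n) + n * n ≤ c * (n * n) := by
        have h9 : (a + 1) * (n * n) ≤ c * (n * n) := mul_le_mul_left (by omega) (n * n)
        linarith only [h9]
      have h6 : b * n + c < n * n := by
        have h9 : (b + 1) * n ≤ n * n := mul_le_mul_left (by omega) n
        linarith only [h9, hc]
      rw [hdec] at hdl
      linarith only [hdl, hdec', h5, h6, Nat.zero_le (b * n), Nat.zero_le c']
  have hPlen : P.length = 3 := by omega
  subst hx_eq
  match P, hPlen with
  | [p0, p1, p2], _ =>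
    simp only [List.getD_cons_zero, List.getD_cons_succ] at hhead hlast hxk
    simp_all
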